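/- If (G,p) is an infinitesimally rigid framework in R^3 at a generic configuration p, then G is rigid at every generic configuration (generic rigidity is a property of the graph: existence of one infinitesimally rigid realization implies rigidity at all generic realizations). -/

import Mathlib

open Finset

set_option synthInstance.maxHeartbeats 1000000
set_option maxHeartbeats 1600000


/-- The standard dot product on `ℝ³`. -/
def dot3 (a b : Fin 3 → ℝ) : ℝ := ∑ i, a i * b i

/-- `ν` is an infinitesimal motion of the framework `(G, p)` in `ℝ³`:
`(p x - p y) ⬝ (ν x - ν y) = 0` for every edge `{x,y}` of `G`. -/
def IsInfMotion {V : Type*} (G : SimpleGraph V) (p ν : V → Fin 3 → ℝ) : Prop :=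
  ∀ ⦃x y : V⦄, G.Adj x y → dot3 (p x - p y) (ν x - ν y) = 0

/-- `ν` is an infinitesimal rigid motion of the configuration `p`:
`(p x - p y) ⬝ (ν x - ν y) = 0` for every pair of vertices. -/
def IsInfRigidMotion {V : Type*} (p ν : V → Fin 3 → ℝ) : Prop :=
  ∀ x y : V, dot3 (p x - p y) (ν x - ν y) = 0

/-- The framework `(G, p)` is infinitesimally rigid in `ℝ³`. -/
def InfRigid {V : Type*} (G : SimpleGraph V) (p : V → Fin 3 → ℝ) : Prop :=
  ∀ ν, IsInfMotion G p ν → IsInfRigidMotion p ν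

/-- The row of the rigidity matrix corresponding to the edge `e`, viewed as the
linear functional `ν ↦ (p x - p y) ⬝ (ν x - ν y)` on the space of velocity assignments. -/
def rowFun {V : Type*} (p : V → Fin 3 → ℝ) (e : Sym2 V) : (V → Fin 3 → ℝ) → ℝ :=
  fun ν => Sym2.lift ⟨fun x y => dot3 (p x - p y) (ν x - ν y), by
    intro x y
    unfold dot3
    apply Finset.sum_congr rfl
    intro i _
    simp only [Pi.sub_apply]
    ring⟩ e

/-- The rows of the rigidity matrix of `(G, p)` (one per edge) are linearly independent. -/
def RigidityIndependent {V : Type*} (G : SimpleGraph V) (p : V → Fin 3 → ℝ) : Prop :=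
  LinearIndependent ℝ (fun e : G.edgeSet => rowFun p (e : Sym2 V))

/-- A configuration is generic if its `3|V|` coordinates are algebraically independent
over the rationals. -/
def Generic {V : Type*} (p : V → Fin 3 → ℝ) : Prop :=
  AlgebraicIndependent ℚ (fun iv : V × Fin 3 => p iv.1 iv.2)

namespace GenRig

open MvPolynomial

variable {V : Type*} [Fintype V] [DecidableEq V]

/-- Dot product on `V × Fin 3 → K`. -/
def dotI {K : Type*} [CommRing K] (a b : V × Fin 3 → K) : K := ∑ n, a n * b n

/-- The coefficient vector of the rigidity-matrix row for the pair `(x, y)`. -/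
noncomputable def cvec (r : V → Fin 3 → ℝ) (x y : V) : V × Fin 3 → ℝ :=
  fun n => (r x n.2 - r y n.2) * ((if n.1 = x then (1:ℝ) else 0) - (if n.1 = y then 1 else 0))

lemma cvec_symm (r : V → Fin 3 → ℝ) (x y : V) : cvec r x y = cvec r y x := by
  funext n; simp only [cvec]; ring

noncomputable def cvecE (r : V → Fin 3 → ℝ) (e : Sym2 V) : V × Fin 3 → ℝ :=
  Sym2.lift ⟨fun x y => cvec r x y, fun x y => cvec_symm r x y⟩ e

@[simp] lemma cvecE_mk (r : V → Fin 3 → ℝ) (x y : V) :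
    cvecE r (Sym2.mk x y) = cvec r x y := rfl

lemma dot3_eq_dotI (r ν : V → Fin 3 → ℝ) (x y : V) :
    dot3 (r x - r y) (ν x - ν y) = dotI (cvec r x y) (fun n => ν n.1 n.2) := by
  unfold dot3 dotI cvec
  rw [Fintype.sum_prod_type_right]
  refine Finset.sum_congr rfl fun i _ => ?_
  have : ∀ v : V,
      (r x i - r y i) * ((if v = x then (1:ℝ) else 0) - (if v = y then 1 else 0)) * ν v i
        = (if v = x then (r x i - r y i) * ν v i else 0)
          - (if v = y then (r x i - r y i) * ν v i else 0) := by
    intro v; split_ifs <;> ring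
  simp only [this, Finset.sum_sub_distrib, Finset.sum_ite_eq', Finset.mem_univ, if_true]
  simp only [Pi.sub_apply]
  ring

lemma dotI_sum {ι : Type*} (s : Finset ι) (c : ι → ℝ) (f : ι → V × Fin 3 → ℝ)
    (w : V × Fin 3 → ℝ) :
    dotI (∑ e ∈ s, c e • f e) w = ∑ e ∈ s, c e * dotI (f e) w := by
  unfold dotI
  simp only [Finset.sum_apply, Pi.smul_apply, smul_eq_mul, Finset.sum_mul]
  rw [Finset.sum_comm]
  refine Finset.sum_congr rfl fun e _ => ?_
  rw [Finset.mul_sum]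
  refine Finset.sum_congr rfl fun n _ => ?_
  ring

lemma exists_sep {K : Type*} [Field K] {ι : Type*} (s : ι → V × Fin 3 → K)
    (u : V × Fin 3 → K) (h : u ∉ Submodule.span K (Set.range s)) :
    ∃ w : V × Fin 3 → K, (∀ i, dotI (s i) w = 0) ∧ dotI u w ≠ 0 := by
  obtain ⟨f, hfu, hmap⟩ := Submodule.exists_dual_map_eq_bot_of_notMem h inferInstance
  set w : V × Fin 3 → K := fun n => f (fun m => if n = m then 1 else 0) with hw
  have key : ∀ v : V × Fin 3 → K, f v = dotI v w := by
    intro v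
    conv_lhs => rw [pi_eq_sum_univ v]
    rw [map_sum]
    unfold dotI
    refine Finset.sum_congr rfl fun n _ => ?_
    rw [map_smul, smul_eq_mul, hw]
  have hzero : ∀ z ∈ Submodule.span K (Set.range s), f z = 0 := by
    intro z hz
    have : f z ∈ Submodule.map f (Submodule.span K (Set.range s)) :=
      Submodule.mem_map_of_mem hz
    rw [hmap, Submodule.mem_bot] at this
    exact this
  refine ⟨w, fun i => ?_, ?_⟩
  · rw [← key]; exact hzero _ (Submodule.subset_span ⟨i, rfl⟩)
  · rw [← key]; exact hfu

lemma dot_eq_zero_of_mem_span {ι : Type*} [Fintype ι] (s : ι → V × Fin 3 → ℝ)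
    (u : V × Fin 3 → ℝ) (h : u ∈ Submodule.span ℝ (Set.range s)) (w : V × Fin 3 → ℝ)
    (h0 : ∀ i, dotI (s i) w = 0) : dotI u w = 0 := by
  obtain ⟨c, hc⟩ := (Submodule.mem_span_range_iff_exists_fun ℝ).mp h
  rw [← hc, dotI_sum]
  simp [h0]


noncomputable def pvec (x y : V) : V × Fin 3 → MvPolynomial (V × Fin 3) ℚ :=
  fun n => (X (x, n.2) - X (y, n.2)) *
    ((if n.1 = x then (1 : MvPolynomial (V × Fin 3) ℚ) else 0) - (if n.1 = y then 1 else 0))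

lemma pvec_symm (x y : V) : pvec x y = pvec y x := by
  funext n; simp only [pvec]; ring

noncomputable def pvecE (e : Sym2 V) : V × Fin 3 → MvPolynomial (V × Fin 3) ℚ :=
  Sym2.lift ⟨fun x y => pvec x y, fun x y => pvec_symm x y⟩ e

@[simp] lemma pvecE_mk (x y : V) : pvecE (Sym2.mk x y) = pvec (V := V) x y := rfl

lemma aeval_pvec (r : V → Fin 3 → ℝ) (x y : V) (n : V × Fin 3) :
    aeval (fun iv : V × Fin 3 => r iv.1 iv.2) (pvec x y n) = cvec r x y n := by
  simp [pvec, cvec, apply_ite (aeval (fun iv : V × Fin 3 => r iv.1 iv.2))]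

lemma aeval_pvecE (r : V → Fin 3 → ℝ) (e : Sym2 V) (n : V × Fin 3) :
    aeval (fun iv : V × Fin 3 => r iv.1 iv.2) (pvecE e n) = cvecE r e n := by
  induction e using Sym2.ind with
  | _ a b => simp [aeval_pvec]


lemma span_transfer (G : SimpleGraph V) [Fintype G.edgeSet] (p q : V → Fin 3 → ℝ)
    (hp : Generic p) (hq : Generic q) (x y : V)
    (hb : cvec p x y ∈ Submodule.span ℝ (Set.range fun e : G.edgeSet => cvecE p (e : Sym2 V))) :
    cvec q x y ∈ Submodule.span ℝ (Set.range fun e : G.edgeSet => cvecE q (e : Sym2 V)) := by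
  classical
  set pc : V × Fin 3 → ℝ := fun iv => p iv.1 iv.2 with hpc
  set qc : V × Fin 3 → ℝ := fun iv => q iv.1 iv.2 with hqc
  have hpinj : Function.Injective (aeval pc : MvPolynomial (V × Fin 3) ℚ →ₐ[ℚ] ℝ) := hp
  have hqinj : Function.Injective (aeval qc : MvPolynomial (V × Fin 3) ℚ →ₐ[ℚ] ℝ) := hq
  set K := IntermediateField.adjoin ℚ (Set.range pc) with hK
  -- entries of the rows lie in K
  have hmemc : ∀ a b : V, ∀ n : V × Fin 3, cvec p a b n ∈ K := by
    intro a b n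
    have h1 : p a n.2 ∈ K := IntermediateField.subset_adjoin ℚ _ ⟨(a, n.2), rfl⟩
    have h2 : p b n.2 ∈ K := IntermediateField.subset_adjoin ℚ _ ⟨(b, n.2), rfl⟩
    have h3 : ((if n.1 = a then (1:ℝ) else 0) - if n.1 = b then 1 else 0) ∈ K := by
      refine sub_mem ?_ ?_ <;> split_ifs <;> first | exact one_mem K | exact zero_mem K
    exact mul_mem (sub_mem h1 h2) h3
  have hmemE : ∀ e : Sym2 V, ∀ n : V × Fin 3, cvecE p e n ∈ K := by
    intro e
    induction e using Sym2.ind with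
    | _ a b => simpa using hmemc a b
  set sK : G.edgeSet → V × Fin 3 → K := fun e n => ⟨cvecE p (e : Sym2 V) n, hmemE _ n⟩ with hsK
  set bK : V × Fin 3 → K := fun n => ⟨cvec p x y n, hmemc x y n⟩ with hbKdef
  -- membership over K
  have hbK : bK ∈ Submodule.span K (Set.range sK) := by
    by_contra hno
    obtain ⟨w, hw0, hwne⟩ := exists_sep sK bK hno
    set wR : V × Fin 3 → ℝ := fun n => (w n : ℝ) with hwR
    have hdot : ∀ u : V × Fin 3 → K, dotI (fun n => (u n : ℝ)) wR = ((dotI u w : K) : ℝ) := by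
      intro u
      unfold dotI
      push_cast
      rfl
    obtain ⟨c, hc⟩ := (Submodule.mem_span_range_iff_exists_fun ℝ).mp hb
    have hz : dotI (cvec p x y) wR = 0 := by
      rw [← hc, dotI_sum]
      refine Finset.sum_eq_zero fun e _ => ?_
      have h1 : dotI (cvecE p (e : Sym2 V)) wR = 0 := by
        have h2 := hdot (sK e)
        rw [hw0 e] at h2
        simpa using h2
      rw [h1, mul_zero]
    have h2 : dotI (cvec p x y) wR = ((dotI bK w : K) : ℝ) := hdot bK
    rw [h2] at hz
    exact hwne (by exact_mod_cast hz)
  obtain ⟨c, hcK⟩ := (Submodule.mem_span_range_iff_exists_fun K).mp hbK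
  -- each coefficient is a ratio of polynomial evaluations
  have hratio : ∀ e : G.edgeSet, ∃ Ce De : MvPolynomial (V × Fin 3) ℚ,
      aeval pc De ≠ 0 ∧ ((c e : ℝ)) * aeval pc De = aeval pc Ce := by
    intro e
    have hce : (c e : ℝ) ∈ IntermediateField.adjoin ℚ (Set.range pc) := by
      rw [← hK]; exact (c e).2
    rw [IntermediateField.mem_adjoin_range_iff] at hce
    obtain ⟨r, s, hrs⟩ := hce
    by_cases hs : aeval pc s = 0
    · refine ⟨0, 1, by simp, ?_⟩
      rw [hrs, hs, div_zero]; simp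
    · refine ⟨r, s, hs, ?_⟩
      rw [hrs]; field_simp
  choose Ce De hDe hCe using hratio
  set D : MvPolynomial (V × Fin 3) ℚ := ∏ e : G.edgeSet, De e with hD
  have hDp : aeval pc D ≠ 0 := by
    rw [hD, map_prod]
    exact Finset.prod_ne_zero_iff.mpr fun e _ => hDe e
  set F : G.edgeSet → MvPolynomial (V × Fin 3) ℚ :=
    fun e => Ce e * ∏ e' ∈ Finset.univ.erase e, De e' with hF
  have hterm : ∀ e : G.edgeSet, aeval pc (F e) = (c e : ℝ) * aeval pc D := by
    intro e
    have h1 : aeval pc D = aeval pc (De e) * ∏ e' ∈ Finset.univ.erase e, aeval pc (De e') := by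
      rw [hD, map_prod, ← Finset.mul_prod_erase _ _ (Finset.mem_univ e)]
    rw [hF, map_mul, map_prod, h1, ← hCe e]
    ring
  -- coordinatewise real identity at p
  have hbn : ∀ n : V × Fin 3, cvec p x y n = ∑ e : G.edgeSet, (c e : ℝ) * cvecE p (e : Sym2 V) n := by
    intro n
    have h1 := congrFun hcK n
    have h2 : ((∑ e : G.edgeSet, c e • sK e) n : ℝ) = ((bK n : K) : ℝ) := by rw [h1]
    rw [Finset.sum_apply] at h2
    push_cast at h2
    exact h2.symm
  -- polynomial identity
  have hpoly : ∀ n : V × Fin 3, D * pvec x y n = ∑ e : G.edgeSet, F e * pvecE (e : Sym2 V) n := by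
    intro n
    apply hpinj
    rw [map_mul, map_sum, aeval_pvec]
    have : ∀ e : G.edgeSet, aeval pc (F e * pvecE (e : Sym2 V) n)
        = (c e : ℝ) * aeval pc D * cvecE p (e : Sym2 V) n := by
      intro e
      rw [map_mul, hterm e, aeval_pvecE]
    rw [Finset.sum_congr rfl fun e _ => this e, hbn n, Finset.mul_sum]
    refine Finset.sum_congr rfl fun e _ => ?_
    ring
  -- D is nonzero, hence its value at q is nonzero
  have hDne : D ≠ 0 := fun h0 => hDp (by rw [h0, map_zero])
  have hDq : aeval qc D ≠ 0 := fun h0 => hDne (hqinj (by rw [h0, map_zero]))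
  -- evaluate the polynomial identity at q
  have hq' : ∀ n : V × Fin 3,
      aeval qc D * cvec q x y n = ∑ e : G.edgeSet, aeval qc (F e) * cvecE q (e : Sym2 V) n := by
    intro n
    have := congrArg (aeval qc) (hpoly n)
    rw [map_mul, map_sum, aeval_pvec] at this
    rw [this]
    exact Finset.sum_congr rfl fun e _ => by rw [map_mul, aeval_pvecE]
  rw [Submodule.mem_span_range_iff_exists_fun ℝ]
  refine ⟨fun e => aeval qc (F e) / aeval qc D, ?_⟩
  funext n
  rw [Finset.sum_apply]
  have : ∀ e : G.edgeSet, ((aeval qc (F e) / aeval qc D) • cvecE q (e : Sym2 V)) n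
      = aeval qc (F e) * cvecE q (e : Sym2 V) n / aeval qc D := by
    intro e; simp [div_mul_eq_mul_div]
  rw [Finset.sum_congr rfl fun e _ => this e, ← Finset.sum_div, ← hq',
    mul_div_cancel_left₀ _ hDq]


lemma rigid_implies_span (G : SimpleGraph V) (p : V → Fin 3 → ℝ) (hr : InfRigid G p) (x y : V) :
    cvec p x y ∈ Submodule.span ℝ (Set.range fun e : G.edgeSet => cvecE p (e : Sym2 V)) := by
  by_contra h
  obtain ⟨w, hw0, hwne⟩ := exists_sep _ _ h
  set ν : V → Fin 3 → ℝ := fun v i => w (v, i) with hν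
  have hflat : (fun n : V × Fin 3 => ν n.1 n.2) = w := rfl
  have hmot : IsInfMotion G p ν := by
    intro a b hab
    rw [dot3_eq_dotI, hflat]
    have := hw0 ⟨Sym2.mk a b, hab⟩
    simpa using this
  have hfin := hr ν hmot x y
  rw [dot3_eq_dotI, hflat] at hfin
  exact hwne hfin

end GenRig


/-- Generic rigidity is a property of the graph: if `(G,p)` is
infinitesimally rigid at one generic configuration `p`, then `(G,q)` is infinitesimally
rigid at every generic configuration `q`. -/

theorem generic_rigidity_is_graph_property {V : Type*} [Fintype V] [DecidableEq V]
    (G : SimpleGraph V) (p : V → Fin 3 → ℝ)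
    (hp : Generic p) (hrigid : InfRigid G p) :
    ∀ q : V → Fin 3 → ℝ, Generic q → InfRigid G q := by
  intro q hq ν hν x y
  classical
  haveI : Fintype G.edgeSet := Fintype.ofFinite _
  have hb := GenRig.rigid_implies_span G p hrigid x y
  have hbq := GenRig.span_transfer G p q hp hq x y hb
  rw [GenRig.dot3_eq_dotI]
  refine GenRig.dot_eq_zero_of_mem_span _ _ hbq _ fun e => ?_
  obtain ⟨e, he⟩ := e
  induction e using Sym2.ind with
  | _ a b =>
    rw [GenRig.cvecE_mk, ← GenRig.dot3_eq_dotI]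
    exact hν ((G.mem_edgeSet).mp he)
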